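/- arXiv:2605.16311 — 3 statements merged into one kernel-verified Lean document; each statement's English description precedes it below -/
import Mathlib

section
/- Let g ∈ ℝ be a real number with g ≠ 0, and let G̃ be a real random variable with E[G̃] = g and Var(G̃) ≤ σ²/n_b for constants σ ≥ 0 and n_b > 0. Then P(sign(G̃) ≠ sign(g)) ≤ σ / (√(n_b) · |g|). -/
open MeasureTheory ProbabilityTheory

/-- **Markov+Jensen sign-failure bound.** If `G̃` is a real random variable with mean `g ≠ 0`
and variance at most `σ²/n_b`, then the probability that `sign(G̃) ≠ sign(g)` is at most
`σ / (√n_b · |g|)`. -/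
theorem sign_failure_markov_bound
    {Ω : Type*} [MeasurableSpace Ω] (μ : Measure Ω) [IsProbabilityMeasure μ]
    (g σ nb : ℝ) (hg : g ≠ 0) (hσ : 0 ≤ σ) (hnb : 0 < nb)
    (G : Ω → ℝ) (hmeas : Measurable G) (hL2 : MemLp G 2 μ)
    (hmean : ∫ ω, G ω ∂μ = g)
    (hvar : variance G μ ≤ σ ^ 2 / nb) :
    (μ {ω | Real.sign (G ω) ≠ Real.sign g}).toReal ≤ σ / (Real.sqrt nb * |g|) := by
  set b := σ / (Real.sqrt nb * |g|) with hb
  have hgabs : 0 < |g| := abs_pos.mpr hg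
  have hbnn : 0 ≤ b := by positivity
  rcases le_or_gt 1 b with h1 | h1
  · calc (μ {ω | Real.sign (G ω) ≠ Real.sign g}).toReal
        ≤ ENNReal.toReal 1 := ENNReal.toReal_mono ENNReal.one_ne_top (prob_le_one)
      _ = 1 := ENNReal.toReal_one
      _ ≤ b := h1
  · have hsub : {ω | Real.sign (G ω) ≠ Real.sign g} ⊆ {ω | |g| ≤ |G ω - g|} := by
      intro ω hω
      simp only [Set.mem_setOf_eq] at hω ⊢
      rcases hg.lt_or_gt with hgneg | hgpos
      · have hG : 0 ≤ G ω := by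
          by_contra h
          exact hω (by rw [Real.sign_of_neg (not_le.mp h), Real.sign_of_neg hgneg])
        have : -g ≤ G ω - g := by linarith
        calc |g| = -g := abs_of_neg hgneg
          _ ≤ G ω - g := this
          _ ≤ |G ω - g| := le_abs_self _
      · have hG : G ω ≤ 0 := by
          by_contra h
          exact hω (by rw [Real.sign_of_pos (not_le.mp h), Real.sign_of_pos hgpos])
        have : g ≤ -(G ω - g) := by linarith
        calc |g| = g := abs_of_pos hgpos
          _ ≤ -(G ω - g) := this
          _ ≤ |G ω - g| := neg_le_abs _
    have hcheby := meas_ge_le_variance_div_sq (μ := μ) hL2 hgabs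
    rw [hmean] at hcheby
    have hvnn : 0 ≤ variance G μ / |g| ^ 2 := div_nonneg (variance_nonneg _ _) (by positivity)
    have hmono : μ {ω | Real.sign (G ω) ≠ Real.sign g} ≤ μ {ω | |g| ≤ |G ω - g|} :=
      measure_mono hsub
    have h2 : (μ {ω | Real.sign (G ω) ≠ Real.sign g}).toReal
        ≤ variance G μ / |g| ^ 2 :=
      ENNReal.toReal_le_of_le_ofReal hvnn (hmono.trans hcheby)
    have hkey : (σ ^ 2 / nb) / |g| ^ 2 = b ^ 2 := by
      rw [hb, div_pow, mul_pow, Real.sq_sqrt hnb.le, div_div]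
    have h3 : variance G μ / |g| ^ 2 ≤ b ^ 2 := by
      rw [← hkey]
      exact div_le_div_of_nonneg_right hvar (by positivity)
    nlinarith
end

section
/- Let M ≥ 1 workers each observe an i.i.d. copy of a sign bit that disagrees with the target sign s ∈ {−1,+1} with probability q, where q satisfies the Gauss-inequality bound: q ≤ 2/(9S²) if S > √(2/3) and q ≤ 1/2 − S/(2√3) otherwise, for a signal-to-noise ratio S > 0. Then the majority-vote failure probability satisfies q^MV := P(sign(Σ_{m=1}^{M} S⁽ᵐ⁾) ≠ s) ≤ (√6/2) · 1/(√M · S). -/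
open MeasureTheory ProbabilityTheory
set_option maxHeartbeats 1000000

/-- A Cantelli-type one-sided deviation bound, in the convenient form
`P(T ≥ m + t) ≤ √V / (2t)`. -/
lemma cantelli_sqrt_aux {Ω : Type*} [MeasurableSpace Ω] (μ : Measure Ω) [IsProbabilityMeasure μ]
    (T : Ω → ℝ) (hTmem : MemLp T 2 μ) (m V t : ℝ) (hTmean : μ[T] = m)
    (hTvar : variance T μ = V) (htpos : 0 < t) (hV0 : 0 ≤ V)
    (E : Set Ω) (hE : ∀ ω ∈ E, m + t ≤ T ω) :
    (μ E).toReal ≤ Real.sqrt V / (2 * t) := by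
  set a : ℝ := V / t with ha
  have ha0 : 0 ≤ a := div_nonneg hV0 htpos.le
  set c : ℝ := a - m with hc
  set f : Ω → ℝ := fun ω => (T ω + c)^2 with hf
  have hsub : E ⊆ {ω | (t + a)^2 ≤ f ω} := by
    intro ω hω
    have h1 : t + a ≤ T ω + c := by
      have := hE ω hω; rw [hc]; linarith
    have h2 : (0:ℝ) ≤ t + a := by linarith
    exact pow_le_pow_left₀ h2 h1 2
  have hnn : 0 ≤ᵐ[μ] f := Filter.Eventually.of_forall fun ω => sq_nonneg _
  have hfint : Integrable f μ := by
    have h := (hTmem.add (memLp_const c)).integrable_sq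
    exact h.congr (Filter.Eventually.of_forall fun ω => by simp [hf, pow_two])
  have hT1 : Integrable T μ := hTmem.integrable one_le_two
  have hT2int : Integrable (fun ω => T ω ^ 2) μ := by
    have h := hTmem.integrable_sq
    exact h.congr (Filter.Eventually.of_forall fun ω => by simp [pow_two])
  have hT2 : ∫ ω, (T ω)^2 ∂μ = V + m^2 := by
    have h := variance_eq_sub hTmem
    rw [hTvar, hTmean] at h
    have h2 : μ[T ^ 2] = ∫ ω, (T ω)^2 ∂μ := by simp [Pi.pow_apply]
    rw [h2] at h
    linarith
  have hfeq : ∫ ω, f ω ∂μ = V + a^2 := by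
    have he : ∀ ω, f ω = (T ω)^2 + ((2*c) * T ω + c^2) := fun ω => by rw [hf]; ring
    calc ∫ ω, f ω ∂μ = ∫ ω, ((T ω)^2 + ((2*c) * T ω + c^2)) ∂μ :=
          integral_congr_ae (Filter.Eventually.of_forall he)
      _ = (∫ ω, (T ω)^2 ∂μ) + ∫ ω, ((2*c) * T ω + c^2) ∂μ :=
          integral_add hT2int ((hT1.const_mul (2*c)).add (integrable_const _))
      _ = (V + m^2) + ((2*c) * m + c^2) := by
          rw [hT2, integral_add (hT1.const_mul (2*c)) (integrable_const _),
            integral_const_mul, hTmean, integral_const]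
          simp
      _ = V + a^2 := by rw [hc]; ring
  have hmarkov := mul_meas_ge_le_integral_of_nonneg hnn hfint ((t+a)^2)
  rw [hfeq] at hmarkov
  have hPle : (μ E).toReal ≤ (μ {ω | (t+a)^2 ≤ f ω}).toReal :=
    ENNReal.toReal_mono (measure_ne_top μ _) (measure_mono hsub)
  have hta : 0 < t + a := by linarith
  have h2 : (t+a)^2 * (μ E).toReal ≤ V + a^2 :=
    le_trans (mul_le_mul_of_nonneg_left hPle (sq_nonneg _)) hmarkov
  have hP2 : (μ E).toReal ≤ (V + a^2) / ((t+a)^2) := by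
    rw [le_div_iff₀ (by positivity)]
    nlinarith [h2]
  have hP3 : (V + a^2) / ((t+a)^2) = V / (t^2 + V) := by
    rw [ha]
    field_simp
  have hP4 : V / (t^2 + V) ≤ Real.sqrt V / (2*t) := by
    rw [div_le_div_iff₀ (by positivity) (by positivity)]
    nlinarith [Real.sq_sqrt hV0, Real.sqrt_nonneg V,
      mul_nonneg (Real.sqrt_nonneg V) (sq_nonneg (t - Real.sqrt V))]
  linarith [hP2, hP3 ▸ hP2]

/-- **Majority vote under the Gauss-inequality bound.** Let `M ≥ 1` workers each observe an
i.i.d. `{−1,+1}`-valued sign bit that disagrees with the target sign `s ∈ {−1,+1}` with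
probability `q`, where `q ≤ 2/(9S²)` if `S > √(2/3)` and `q ≤ 1/2 − S/(2√3)` otherwise, for a
signal-to-noise ratio `S > 0`. Then the majority-vote failure probability satisfies
`P(sign(Σₘ S⁽ᵐ⁾) ≠ s) ≤ (√6/2) · 1/(√M · S)`. -/
theorem majority_vote_snr_bound
    {Ω : Type*} [MeasurableSpace Ω] (μ : Measure Ω) [IsProbabilityMeasure μ]
    (M : ℕ) (hM : 1 ≤ M) (s q snr : ℝ) (hs : s = 1 ∨ s = -1)
    (hq0 : 0 ≤ q) (hsnr : 0 < snr)
    (hgauss_large : Real.sqrt (2 / 3) < snr → q ≤ 2 / (9 * snr ^ 2))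
    (hgauss_small : ¬ Real.sqrt (2 / 3) < snr → q ≤ 1 / 2 - snr / (2 * Real.sqrt 3))
    (S : Fin M → Ω → ℝ)
    (hmeas : ∀ i, Measurable (S i))
    (hindep : iIndepFun S μ)
    (hval : ∀ i ω, S i ω = 1 ∨ S i ω = -1)
    (hcorrect : ∀ i, μ {ω | S i ω = s} = ENNReal.ofReal (1 - q))
    (hwrong : ∀ i, μ {ω | S i ω = -s} = ENNReal.ofReal q) :
    (μ {ω | Real.sign (∑ i, S i ω) ≠ s}).toReal
      ≤ (Real.sqrt 6 / 2) * (1 / (Real.sqrt M * snr)) := by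
  classical
  -- the key scalar facts
  have hkey : q < 1/2 ∧ snr * Real.sqrt (q * (1 - q)) ≤ Real.sqrt 6 * (1/2 - q) := by
    by_cases hc : Real.sqrt (2/3) < snr
    · have h1 := hgauss_large hc
      have hsq : (2:ℝ)/3 < snr^2 := by
        have h2 : (Real.sqrt (2/3))^2 < snr^2 :=
          pow_lt_pow_left₀ hc (Real.sqrt_nonneg _) (by norm_num)
        rwa [Real.sq_sqrt (by norm_num : (0:ℝ) ≤ 2/3)] at h2
      have h9 : q * (9 * snr^2) ≤ 2 := (le_div_iff₀ (by positivity)).mp h1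
      have hq13 : q ≤ 1/3 := by nlinarith
      have hqlt : q < 1/2 := by linarith
      refine ⟨hqlt, ?_⟩
      have hmain : snr^2 * (q * (1 - q)) ≤ 6 * (1/2 - q)^2 := by
        nlinarith [sq_nonneg (q - 1/3),
          mul_nonneg (by linarith : (0:ℝ) ≤ 2 - q * (9*snr^2)) (by linarith : (0:ℝ) ≤ 1 - q)]
      have e1 : snr * Real.sqrt (q * (1 - q)) = Real.sqrt (snr^2 * (q * (1 - q))) := by
        rw [Real.sqrt_mul (sq_nonneg _), Real.sqrt_sq hsnr.le]
      have e2 : Real.sqrt 6 * (1/2 - q) = Real.sqrt (6 * (1/2 - q)^2) := by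
        rw [Real.sqrt_mul (by norm_num), Real.sqrt_sq (by linarith)]
      rw [e1, e2]
      exact Real.sqrt_le_sqrt hmain
    · have h1 := hgauss_small hc
      have h3 : (0:ℝ) < Real.sqrt 3 := Real.sqrt_pos.mpr (by norm_num)
      have hqlt : q < 1/2 := by
        nlinarith [div_pos hsnr (by positivity : (0:ℝ) < 2 * Real.sqrt 3)]
      refine ⟨hqlt, ?_⟩
      have h1' : snr / (2 * Real.sqrt 3) ≤ 1/2 - q := by linarith
      have h1'' : snr ≤ (1/2 - q) * (2 * Real.sqrt 3) := (div_le_iff₀ (by positivity)).mp h1'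
      have hr : Real.sqrt (q * (1 - q)) ≤ 1/2 := by
        have hle : q * (1 - q) ≤ (1/2:ℝ)^2 := by nlinarith
        calc Real.sqrt (q * (1 - q)) ≤ Real.sqrt ((1/2:ℝ)^2) := Real.sqrt_le_sqrt hle
          _ = 1/2 := Real.sqrt_sq (by norm_num)
      have hs1 : snr * Real.sqrt (q * (1 - q)) ≤ snr * (1/2) :=
        mul_le_mul_of_nonneg_left hr hsnr.le
      have hs2 : snr * (1/2) ≤ Real.sqrt 3 * (1/2 - q) := by nlinarith
      have hs3 : Real.sqrt 3 * (1/2 - q) ≤ Real.sqrt 6 * (1/2 - q) :=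
        mul_le_mul_of_nonneg_right (Real.sqrt_le_sqrt (by norm_num)) (by linarith)
      linarith
  obtain ⟨hqlt, key⟩ := hkey
  have hM0 : (0:ℝ) < M := by exact_mod_cast hM
  -- the indicator variables of being wrong
  set A : Fin M → Set Ω := fun i => {ω | S i ω = -s} with hA
  have hAm : ∀ i, MeasurableSet (A i) := fun i => (hmeas i) (measurableSet_singleton (-s))
  set X : Fin M → Ω → ℝ := fun i => (A i).indicator (fun _ => 1) with hXdef
  have hX01 : ∀ i ω, X i ω = if S i ω = -s then 1 else 0 := by
    intro i ω; simp [hXdef, hA, Set.indicator_apply]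
  have hXmem : ∀ i, MemLp (X i) 2 μ := fun i =>
    memLp_indicator_const 2 (hAm i) 1 (Or.inr (measure_ne_top μ _))
  have hXint : ∀ i, ∫ ω, X i ω ∂μ = q := by
    intro i
    rw [hXdef]
    simp only [integral_indicator_const (1:ℝ) (hAm i), smul_eq_mul, mul_one]
    rw [hA]
    simp [Measure.real, hwrong i, ENNReal.toReal_ofReal hq0]
  have hXvar : ∀ i, variance (X i) μ = q * (1 - q) := by
    intro i
    rw [variance_eq_sub (hXmem i)]
    have hsq : (X i ^ 2 : Ω → ℝ) = X i := by
      funext ω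
      rcases (em (S i ω = -s)) with h | h <;> simp [hX01 i ω, h]
    rw [hsq]
    have hint : μ[X i] = q := hXint i
    rw [hint]
    ring
  have hXindep : iIndepFun X μ := by
    have hg : ∀ _i : Fin M, Measurable (fun x : ℝ => if x = -s then (1:ℝ) else 0) := by
      intro i
      exact measurable_const.ite (measurableSet_singleton (-s)) measurable_const
    have h := hindep.comp (fun _ => fun x : ℝ => if x = -s then (1:ℝ) else 0) hg
    have hXeq : X = fun i => (fun x : ℝ => if x = -s then (1:ℝ) else 0) ∘ S i := by
      funext i ω; simp [hX01 i ω, Function.comp]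
    rw [hXeq]; exact h
  -- their sum
  set T : Ω → ℝ := ∑ i, X i with hTdef
  have hTmem : MemLp T 2 μ := memLp_finset_sum' _ (fun i _ => hXmem i)
  have hTvar : variance T μ = M * (q * (1 - q)) := by
    rw [hTdef, IndepFun.variance_sum (fun i _ => hXmem i)
      (fun i _ j _ hij => hXindep.indepFun hij)]
    simp [hXvar, Finset.card_univ, mul_comm]
  have hTmean : μ[T] = M * q := by
    rw [hTdef]
    simp only [Finset.sum_apply]
    rw [integral_finset_sum _ (fun i _ => (hXmem i).integrable one_le_two)]
    simp [hXint, Finset.card_univ, mul_comm]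
  -- the failure event forces T ≥ M/2
  have hE : ∀ ω ∈ {ω | Real.sign (∑ i, S i ω) ≠ s},
      (M:ℝ) * q + (M:ℝ) * (1/2 - q) ≤ T ω := by
    intro ω hω
    have hgoal : (M:ℝ)/2 ≤ ∑ i, X i ω := by
      by_contra hlt
      push_neg at hlt
      set Tv := ∑ i, X i ω with hTv
      have hpt : ∀ i, S i ω = s - 2*s*(X i ω) := by
        intro i
        by_cases h : S i ω = -s
        · rw [hX01 i ω, if_pos h, h]; ring
        · have hS : S i ω = s := by
            rcases hval i ω with h1 | h1 <;> rcases hs with h2 | h2 <;> simp_all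
          rw [hX01 i ω, if_neg h, hS]; ring
      have hsum : ∑ i, S i ω = s * (M - 2 * Tv) := by
        calc ∑ i, S i ω = ∑ i, (s - 2*s*(X i ω)) := Finset.sum_congr rfl fun i _ => hpt i
          _ = M * s - 2*s*Tv := by
              rw [Finset.sum_sub_distrib, Finset.sum_const, Finset.card_univ, ← Finset.mul_sum]
              simp [hTv]
          _ = s * (M - 2 * Tv) := by ring
      have hpos : (0:ℝ) < M - 2*Tv := by linarith
      rcases hs with rfl | rfl
      · exact hω (by rw [hsum, one_mul]; exact Real.sign_of_pos hpos)
      · refine hω ?_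
        rw [hsum]
        have hneg : (-1:ℝ) * (M - 2*Tv) < 0 := by linarith
        exact Real.sign_of_neg hneg
    have hTapp : T ω = ∑ i, X i ω := by simp [hTdef]
    rw [hTapp]
    nlinarith [hgoal]
  -- apply the Cantelli-type bound
  have hC := cantelli_sqrt_aux μ T hTmem ((M:ℝ)*q) ((M:ℝ)*(q*(1-q))) ((M:ℝ)*(1/2-q))
    hTmean hTvar (mul_pos hM0 (by linarith)) (mul_nonneg hM0.le (mul_nonneg hq0 (by linarith))) _ hE
  refine le_trans hC ?_
  -- final algebra
  have hsm : 0 < Real.sqrt M := Real.sqrt_pos.mpr hM0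
  have hr0 : 0 ≤ Real.sqrt (q * (1 - q)) := Real.sqrt_nonneg _
  have hVs : Real.sqrt ((M:ℝ)*(q*(1-q))) = Real.sqrt M * Real.sqrt (q * (1 - q)) :=
    Real.sqrt_mul (Nat.cast_nonneg M) _
  have hMs : (M:ℝ) = Real.sqrt M * Real.sqrt M := (Real.mul_self_sqrt hM0.le).symm
  rw [hVs, div_le_iff₀ (by nlinarith : (0:ℝ) < 2*((M:ℝ)*(1/2-q)))]
  have hrw : Real.sqrt 6/2 * (1/(Real.sqrt M*snr)) * (2*((M:ℝ)*(1/2-q)))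
      = (Real.sqrt M * (Real.sqrt 6*(1/2-q)))/snr := by
    field_simp
    linear_combination (1-2*q) * hMs
  rw [hrw, le_div_iff₀ hsnr]
  have hfin := mul_le_mul_of_nonneg_left key hsm.le
  nlinarith [hfin]
end

section
/- Let g ∈ ℝ with g ≠ 0 and, for each of M workers, let G̃⁽ᵐ⁾ be independent real random variables with E[G̃⁽ᵐ⁾] = g, Var(G̃⁽ᵐ⁾) ≤ σ²/n_b, and with G̃⁽ᵐ⁾ − g having a distribution that is unimodal and symmetric about 0. Let S⁽ᵐ⁾ := sign(G̃⁽ᵐ⁾) and let the majority vote be S̄ := sign(Σ_{m=1}^{M} S⁽ᵐ⁾). Then P(S̄ ≠ sign(g)) ≤ (√6/2) · (1/√M) · σ / (√(n_b) · |g|). -/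
open MeasureTheory ProbabilityTheory Set
set_option maxHeartbeats 1000000


lemma measurable_realSign : Measurable Real.sign := by
  unfold Real.sign
  exact (measurable_const.ite (measurableSet_lt measurable_id measurable_const) <|
    measurable_const.ite (measurableSet_lt measurable_const measurable_id) measurable_const)

lemma realSign_ne_one_iff {y : ℝ} : Real.sign y ≠ 1 ↔ y ≤ 0 := by
  rcases lt_trichotomy y 0 with h | h | h
  · rw [Real.sign_of_neg h]; norm_num [h.le]
  · simp [h, Real.sign_zero]
  · simp [Real.sign_of_pos h, h, not_le.mpr h]

lemma abs_realSign_le (y : ℝ) : |Real.sign y| ≤ 1 := by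
  rcases Real.sign_apply_eq y with h | h | h <;> rw [h] <;> norm_num


/-- A distribution on `ℝ` is unimodal and symmetric about `0` if it has a density (w.r.t.
Lebesgue measure) that is symmetric about `0` and nonincreasing in `|x|`. -/
def UnimodalSymmetric (ν : Measure ℝ) : Prop :=
  ∃ p : ℝ → ENNReal, ν = MeasureTheory.volume.withDensity p ∧
    (∀ x : ℝ, p (-x) = p x) ∧
    ∀ ⦃x y : ℝ⦄, 0 ≤ x → x ≤ y → p y ≤ p x

lemma symm_setLIntegral (f : ℝ → ENNReal) (s : Set ℝ) :
    ∫⁻ a in (fun x : ℝ => -x) ⁻¹' s, f (-a) ∂volume = ∫⁻ b in s, f b ∂volume :=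
  (Measure.measurePreserving_neg volume).setLIntegral_comp_preimage_emb
    measurableEmbedding_neg f s

lemma unimodal_measurable {q : ℝ → ENNReal} (hsym : ∀ x, q (-x) = q x)
    (hmono : ∀ ⦃x y : ℝ⦄, 0 ≤ x → x ≤ y → q y ≤ q x) : Measurable q := by
  refine measurable_of_Ioi fun a => ?_
  have h : (q ⁻¹' Ioi a).OrdConnected := by
    constructor
    intro x hx y hy z hz
    rcases le_or_gt 0 z with h0 | h0
    · exact lt_of_lt_of_le hy (hmono h0 hz.2)
    · have h1 : q x ≤ q z := by
        rw [← hsym z, ← hsym x]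
        exact hmono (by linarith) (by linarith [hz.1])
      exact lt_of_lt_of_le hx h1
  exact h.measurableSet

lemma tail_bound {q : ℝ → ENNReal} (hsym : ∀ x, q (-x) = q x)
    (hmono : ∀ ⦃x y : ℝ⦄, 0 ≤ x → x ≤ y → q y ≤ q x)
    {t v : ℝ} (ht : 0 < t)
    (hprob : volume.withDensity q Set.univ = 1)
    (hmom : ∫⁻ x, ENNReal.ofReal (x ^ 2) * q x ∂volume ≤ ENNReal.ofReal v) :
    0 < v ∧ ∃ u : ℝ, 0 ≤ u ∧ u ≤ 1 ∧
      ((volume.withDensity q) (Iic (-t))).toReal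
        ≤ (u ^ 2 - (t / Real.sqrt (3 * v)) * u ^ 3) / 2 := by
  have hq : Measurable q := unimodal_measurable hsym hmono
  set ν := volume.withDensity q with hν
  -- v > 0
  have hv : 0 < v := by
    by_contra hv
    push_neg at hv
    have h0 : ∫⁻ x, ENNReal.ofReal (x ^ 2) * q x ∂volume = 0 :=
      le_antisymm (hmom.trans (by simp [ENNReal.ofReal_eq_zero.mpr hv])) bot_le
    have hae := (lintegral_eq_zero_iff ((ENNReal.measurable_ofReal.comp
      ((measurable_id.pow_const 2))).mul hq)).mp h0
    have hne : ∀ᵐ x : ℝ ∂volume, x ≠ 0 := by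
      refine ae_iff.mpr ?_
      have : {x : ℝ | ¬ x ≠ 0} = {0} := by ext x; simp
      rw [this, Real.volume_singleton]
    have hq0 : q =ᵐ[volume] 0 := by
      filter_upwards [hae, hne] with x hx hx0
      have hx2 : ENNReal.ofReal (x ^ 2) ≠ 0 := by
        simp only [ne_eq, ENNReal.ofReal_eq_zero, not_le]
        positivity
      simpa [hx2] using hx
    have : ν Set.univ = 0 := by
      rw [hν, withDensity_apply _ MeasurableSet.univ, Measure.restrict_univ,
        lintegral_congr_ae hq0]; simp
    rw [this] at hprob
    exact zero_ne_one hprob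
  refine ⟨hv, ?_⟩
  -- point masses vanish
  have hnull : ∀ a : ℝ, ν {a} = 0 := by
    intro a
    rw [hν, withDensity_apply _ (measurableSet_singleton a),
      Measure.restrict_eq_zero.mpr (Real.volume_singleton), lintegral_zero_measure]
  have hIciIoi : ∀ a : ℝ, ν (Ici a) = ν (Ioi a) := by
    intro a
    refine le_antisymm ?_ (measure_mono Ioi_subset_Ici_self)
    calc ν (Ici a) ≤ ν ({a} ∪ Ioi a) := by
          refine measure_mono fun x hx => ?_
          rcases eq_or_lt_of_le (mem_Ici.mp hx) with h | h
          · exact Or.inl h.symm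
          · exact Or.inr h
      _ ≤ ν {a} + ν (Ioi a) := measure_union_le _ _
      _ = ν (Ioi a) := by rw [hnull a, zero_add]
  -- symmetry of ν
  have hνneg : ∀ s : Set ℝ, MeasurableSet s → ν ((fun x : ℝ => -x) ⁻¹' s) = ν s := by
    intro s hs
    rw [hν, withDensity_apply _ (hs.preimage measurable_neg), withDensity_apply _ hs,
      ← symm_setLIntegral q s]
    exact setLIntegral_congr_fun (hs.preimage measurable_neg)
      (fun a _ => (hsym a).symm)
  have hIic : ν (Iic (-t)) = ν (Ioi t) := by
    have hset : Iic (-t) = (fun x : ℝ => -x) ⁻¹' (Ici t) := by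
      ext x; simp [le_neg]
    rw [hset, hνneg _ measurableSet_Ici, hIciIoi]
  -- half mass
  have hhalf : ν (Ioi 0) + ν (Ioi 0) = 1 := by
    have h1 : ν (Iio 0) = ν (Ioi 0) := by
      have hset : Iio (0:ℝ) = (fun x : ℝ => -x) ⁻¹' (Ioi 0) := by
        ext x; simp [lt_neg]
      rw [hset, hνneg _ measurableSet_Ioi]
    have h2 : ν (Iio 0) + ν (Ici 0) = ν Set.univ := by
      rw [← measure_union (Iio_disjoint_Ici le_rfl) measurableSet_Ici, Iio_union_Ici]
    rw [h1, hIciIoi] at h2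
    rw [h2, hprob]
  have hIoi0_le : ν (Ioi 0) ≤ 1 := le_trans le_self_add hhalf.le
  have hIoi0_fin : ν (Ioi 0) ≠ ⊤ := (lt_of_le_of_lt hIoi0_le ENNReal.one_lt_top).ne
  -- density value at t
  set c : ENNReal := q t with hc
  have hcfin : c ≠ ⊤ := by
    intro hctop
    have hsub : ν (Ioc (t/2) t) ≤ 1 := by
      rw [← hprob]; exact measure_mono (subset_univ _)
    have : (⊤ : ENNReal) * ENNReal.ofReal (t - t/2) ≤ ν (Ioc (t/2) t) := by
      rw [hν, withDensity_apply _ measurableSet_Ioc, ← Real.volume_Ioc,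
        ← setLIntegral_const (Ioc (t/2) t) ⊤]
      refine setLIntegral_mono hq fun x hx => ?_
      rw [← hctop]
      exact hmono (by linarith [hx.1]) hx.2
    rw [ENNReal.top_mul (by simp [ENNReal.ofReal_eq_zero]; linarith)] at this
    exact absurd (this.trans hsub) (by simp)
  set τ : ENNReal := ν (Ioi t) with hτ
  set A : ENNReal := τ + c * ENNReal.ofReal t with hA
  -- mass of middle intervals
  have hmid : ∀ x : ℝ, 0 ≤ x → x ≤ t → c * ENNReal.ofReal (t - x) ≤ ν (Ioc x t) := by
    intro x hx hxt
    rw [hν, withDensity_apply _ measurableSet_Ioc, ← Real.volume_Ioc,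
      ← setLIntegral_const (Ioc x t) c]
    refine setLIntegral_mono hq fun y hy => ?_
    exact hmono (le_trans hx hy.1.le) hy.2
  have htmass : ∀ w : ℝ, t ≤ w → ν (Ioc t w) ≤ c * ENNReal.ofReal (w - t) := by
    intro w hw
    rw [hν, withDensity_apply _ measurableSet_Ioc, ← Real.volume_Ioc,
      ← setLIntegral_const (Ioc t w) c]
    refine setLIntegral_mono measurable_const fun y hy => ?_
    exact hmono ht.le hy.1.le
  -- key tail estimate
  have hkey : ∀ u : ℝ, 0 < u → A ≤ ν (Ici u) + c * ENNReal.ofReal u := by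
    intro u hu
    rcases le_or_gt u t with h | h
    · have h1 : c * ENNReal.ofReal (t - u) ≤ ν (Ioc u t) := hmid u hu.le h
      have h2 : ν (Ioc u t) + ν (Ioi t) ≤ ν (Ici u) := by
        rw [← measure_union (by
            exact (Set.Ioc_disjoint_Ioi le_rfl)) measurableSet_Ioi,
          Ioc_union_Ioi_eq_Ioi h]
        exact measure_mono Ioi_subset_Ici_self
      have h3 : ENNReal.ofReal t = ENNReal.ofReal (t - u) + ENNReal.ofReal u := by
        rw [← ENNReal.ofReal_add (by linarith) hu.le]; ring_nf
      calc A = τ + c * ENNReal.ofReal t := rfl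
        _ = (c * ENNReal.ofReal (t - u) + ν (Ioi t)) + c * ENNReal.ofReal u := by
            rw [h3, mul_add]; ring
        _ ≤ ν (Ici u) + c * ENNReal.ofReal u := by
            refine add_le_add_left ?_ _
            exact le_trans (add_le_add_left h1 _) h2
    · have h1 : ν (Ioc t u) ≤ c * ENNReal.ofReal (u - t) := htmass u h.le
      have h2 : τ ≤ ν (Ioc t u) + ν (Ici u) := by
        rw [hτ]
        calc ν (Ioi t) = ν (Ioc t u ∪ Ioi u) := by rw [Ioc_union_Ioi_eq_Ioi h.le]
          _ ≤ ν (Ioc t u) + ν (Ioi u) := measure_union_le _ _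
          _ ≤ ν (Ioc t u) + ν (Ici u) := by
              exact add_le_add_right (measure_mono Ioi_subset_Ici_self) _
      have h3 : ENNReal.ofReal u = ENNReal.ofReal (u - t) + ENNReal.ofReal t := by
        rw [← ENNReal.ofReal_add (by linarith) ht.le]; ring_nf
      calc A = τ + c * ENNReal.ofReal t := rfl
        _ ≤ (ν (Ioc t u) + ν (Ici u)) + c * ENNReal.ofReal t := add_le_add_left h2 _
        _ ≤ (c * ENNReal.ofReal (u - t) + ν (Ici u)) + c * ENNReal.ofReal t := by
            exact add_le_add_left (add_le_add_left h1 _) _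
        _ = ν (Ici u) + c * ENNReal.ofReal u := by rw [h3, mul_add]; ring
  -- A is at most the mass of (0, ∞)
  have hA_half : A ≤ ν (Ioi 0) := by
    have h1 : c * ENNReal.ofReal t ≤ ν (Ioc 0 t) := by
      simpa using hmid 0 le_rfl ht.le
    have h2 : ν (Ioc 0 t) + ν (Ioi t) = ν (Ioi 0) := by
      rw [← measure_union (Set.Ioc_disjoint_Ioi le_rfl) measurableSet_Ioi,
        Ioc_union_Ioi_eq_Ioi ht.le]
    calc A = τ + c * ENNReal.ofReal t := rfl
      _ ≤ ν (Ioi t) + ν (Ioc 0 t) := add_le_add_right h1 _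
      _ = ν (Ioi 0) := by rw [add_comm]; exact h2
  have hAfin : A ≠ ⊤ := (lt_of_le_of_lt (hA_half.trans hIoi0_le) ENNReal.one_lt_top).ne
  
  -- moment over (0, infty)
  set F := fun x : ℝ => ENNReal.ofReal (x ^ 2) * q x with hF
  have hFmeas : Measurable F :=
    (ENNReal.measurable_ofReal.comp (measurable_id.pow_const 2)).mul hq
  have hFsym : ∀ x, F (-x) = F x := by
    intro x
    simp only [hF]
    rw [show ((-x) ^ 2 : ℝ) = x ^ 2 from by ring, hsym]
  have hIioF : ∫⁻ x in Iio 0, F x ∂volume = ∫⁻ x in Ioi 0, F x ∂volume := by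
    have hset : Iio (0:ℝ) = (fun x : ℝ => -x) ⁻¹' (Ioi 0) := by
      ext x; simp [lt_neg]
    rw [hset, ← symm_setLIntegral F (Ioi 0)]
    exact setLIntegral_congr_fun (measurableSet_Ioi.preimage measurable_neg)
      (fun a _ => (hFsym a).symm)
  have hmomIoi : ∫⁻ x in Ioi 0, F x ∂volume ≤ ENNReal.ofReal v / 2 := by
    have hsum : ∫⁻ x in Iio 0, F x ∂volume + ∫⁻ x in Ioi 0, F x ∂volume
        ≤ ENNReal.ofReal v := by
      rw [← lintegral_union measurableSet_Ioi
        ((Iio_disjoint_Ici le_rfl).mono_right Ioi_subset_Ici_self)]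
      exact le_trans (setLIntegral_le_lintegral _ _) hmom
    rw [hIioF, ← two_mul] at hsum
    exact (ENNReal.le_div_iff_mul_le (Or.inl (by norm_num)) (Or.inl (by norm_num))).mpr
      (by rwa [mul_comm])
  have hsqOf : Measurable fun x : ℝ => ENNReal.ofReal (x ^ 2) :=
    (measurable_id'.pow_const 2).ennreal_ofReal
  have h2sOf : Measurable fun s : ℝ => ENNReal.ofReal (2 * s) :=
    (measurable_id'.const_mul 2).ennreal_ofReal
  have h2s2Of : Measurable fun s : ℝ => ENNReal.ofReal (2 * s ^ 2) :=
    ((measurable_id'.pow_const 2).const_mul 2).ennreal_ofReal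
  -- layer cake estimate
  have hlayer : ∀ z : ℝ, 0 ≤ z → A * ENNReal.ofReal (z ^ 2)
      ≤ ENNReal.ofReal v / 2 + c * ENNReal.ofReal (2 * z ^ 3 / 3) := by
    intro z hz
    have hres : ν.restrict (Ioi 0) = (volume.restrict (Ioi 0)).withDensity q :=
      restrict_withDensity measurableSet_Ioi q
    have hcake : ∫⁻ x, ENNReal.ofReal (x ^ 2) ∂(ν.restrict (Ioi 0)) =
        ∫⁻ s in Ioi 0, ν.restrict (Ioi 0) {a | s ≤ a} * ENNReal.ofReal (2 * s) := by
      have h := lintegral_comp_eq_lintegral_meas_le_mul (ν.restrict (Ioi 0))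
        (f := fun x : ℝ => x) (g := fun s => 2 * s)
        ((ae_restrict_iff' measurableSet_Ioi).mpr (ae_of_all _ fun x hx => le_of_lt hx))
        aemeasurable_id
        (fun r _ => (continuous_const.mul continuous_id).intervalIntegrable 0 r)
        ((ae_restrict_iff' measurableSet_Ioi).mpr (ae_of_all _ fun s hs => by
          have h0 : (0:ℝ) < s := hs
          show (0:ℝ) ≤ 2 * s
          linarith))
      rw [← h]
      refine lintegral_congr fun x => ?_
      congr 1
      rw [intervalIntegral.integral_const_mul, integral_id]
      ring
    have hmom2 : ∫⁻ x, ENNReal.ofReal (x ^ 2) ∂(ν.restrict (Ioi 0))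
        ≤ ENNReal.ofReal v / 2 := by
      rw [hres, lintegral_withDensity_eq_lintegral_mul _ hq hsqOf]
      exact le_trans (le_of_eq (lintegral_congr fun x => mul_comm _ _)) hmomIoi
    have htail : ∀ s : ℝ, 0 < s → ν.restrict (Ioi 0) {a | s ≤ a} = ν (Ici s) := by
      intro s hs
      rw [show {a : ℝ | s ≤ a} = Ici s from rfl, Measure.restrict_apply measurableSet_Ici]
      congr 1
      exact inter_eq_left.mpr fun x hx => lt_of_lt_of_le hs hx
    have hIci_meas : Measurable fun s : ℝ => ν (Ici s) :=
      Antitone.measurable fun s s' hss' => measure_mono (Ici_subset_Ici.mpr hss')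
    have hint1 : IntegrableOn (fun s : ℝ => 2 * s) (Ioo 0 z) volume :=
      (((continuous_const.mul continuous_id').integrableOn_Icc)).mono_set Ioo_subset_Icc_self
    have hint2 : IntegrableOn (fun s : ℝ => 2 * s ^ 2) (Ioo 0 z) volume :=
      (((continuous_const.mul (continuous_pow 2)).integrableOn_Icc)).mono_set
        Ioo_subset_Icc_self
    have hL1 : ∫⁻ s in Ioo 0 z, ENNReal.ofReal (2 * s) ∂volume = ENNReal.ofReal (z ^ 2) := by
      rw [← ofReal_integral_eq_lintegral_ofReal hint1
        ((ae_restrict_iff' measurableSet_Ioo).mpr (ae_of_all _ fun s hs => by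
          have h0 : (0:ℝ) < s := hs.1
          show (0:ℝ) ≤ 2 * s
          linarith))]
      congr 1
      rw [← integral_Ioc_eq_integral_Ioo, ← intervalIntegral.integral_of_le hz,
        intervalIntegral.integral_const_mul, integral_id]
      ring
    have hL2 : ∫⁻ s in Ioo 0 z, ENNReal.ofReal (2 * s ^ 2) ∂volume
        = ENNReal.ofReal (2 * z ^ 3 / 3) := by
      rw [← ofReal_integral_eq_lintegral_ofReal hint2
        ((ae_restrict_iff' measurableSet_Ioo).mpr (ae_of_all _ fun s hs => by
          have h0 : (0:ℝ) < s := hs.1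
          show (0:ℝ) ≤ 2 * s ^ 2
          positivity))]
      congr 1
      rw [← integral_Ioc_eq_integral_Ioo, ← intervalIntegral.integral_of_le hz,
        intervalIntegral.integral_const_mul, integral_pow]
      ring
    calc A * ENNReal.ofReal (z ^ 2)
        = ∫⁻ s in Ioo 0 z, A * ENNReal.ofReal (2 * s) ∂volume := by
          rw [lintegral_const_mul _ h2sOf, hL1]
      _ ≤ ∫⁻ s in Ioo 0 z, (ν (Ici s) * ENNReal.ofReal (2 * s)
            + c * ENNReal.ofReal (2 * s ^ 2)) ∂volume := by
          refine setLIntegral_mono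
            ((hIci_meas.mul h2sOf).add (h2s2Of.const_mul c)) fun s hs => ?_
          have hk := hkey s hs.1
          have hprod : ENNReal.ofReal s * ENNReal.ofReal (2 * s)
              = ENNReal.ofReal (2 * s ^ 2) := by
            rw [← ENNReal.ofReal_mul hs.1.le]
            congr 1
            ring
          calc A * ENNReal.ofReal (2 * s)
              ≤ (ν (Ici s) + c * ENNReal.ofReal s) * ENNReal.ofReal (2 * s) :=
                mul_le_mul_left hk _
            _ = ν (Ici s) * ENNReal.ofReal (2 * s)
                + c * (ENNReal.ofReal s * ENNReal.ofReal (2 * s)) := by ring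
            _ = _ := by rw [hprod]
      _ = ∫⁻ s in Ioo 0 z, ν (Ici s) * ENNReal.ofReal (2 * s) ∂volume
            + ∫⁻ s in Ioo 0 z, c * ENNReal.ofReal (2 * s ^ 2) ∂volume := by
          rw [lintegral_add_right _ (h2s2Of.const_mul c)]
      _ ≤ ENNReal.ofReal v / 2 + c * ENNReal.ofReal (2 * z ^ 3 / 3) := by
          refine add_le_add ?_ ?_
          · refine le_trans (lintegral_mono_set fun x hx => hx.1) ?_
            refine le_trans (le_of_eq ?_) hmom2
            rw [hcake]
            exact (setLIntegral_congr_fun measurableSet_Ioi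
              (fun s hs => by rw [htail s hs])).symm
          · rw [lintegral_const_mul _ h2s2Of, hL2]
  
  -- pass to real numbers
  have hcmul_fin : c * ENNReal.ofReal t ≠ ⊤ := ne_top_of_le_ne_top hAfin le_add_self
  have hτfin : τ ≠ ⊤ := ne_top_of_le_ne_top hAfin le_self_add
  set c' := c.toReal with hc'
  set A' := A.toReal with hA'
  set τ' := τ.toReal with hτ'
  have hc'_nonneg : 0 ≤ c' := ENNReal.toReal_nonneg
  have hτ'_nonneg : 0 ≤ τ' := ENNReal.toReal_nonneg
  have hA'_nonneg : 0 ≤ A' := ENNReal.toReal_nonneg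
  have hA'_eq : A' = τ' + c' * t := by
    rw [hA', hA, ENNReal.toReal_add hτfin hcmul_fin, ENNReal.toReal_mul,
      ENNReal.toReal_ofReal ht.le]
  have hA'_half : A' ≤ 1 / 2 := by
    have h2 := congrArg ENNReal.toReal hhalf
    rw [ENNReal.toReal_add hIoi0_fin hIoi0_fin, ENNReal.toReal_one] at h2
    have h3 : A' ≤ (ν (Ioi 0)).toReal := ENNReal.toReal_mono hIoi0_fin hA_half
    linarith
  have hreal : ∀ z : ℝ, 0 ≤ z → A' * z ^ 2 ≤ v / 2 + c' * (2 * z ^ 3 / 3) := by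
    intro z hz
    have h := hlayer z hz
    have hrhs_fin : ENNReal.ofReal v / 2 + c * ENNReal.ofReal (2 * z ^ 3 / 3) ≠ ⊤ :=
      ENNReal.add_ne_top.mpr ⟨(ENNReal.div_lt_top ENNReal.ofReal_ne_top (by norm_num)).ne,
        ENNReal.mul_ne_top hcfin ENNReal.ofReal_ne_top⟩
    have h2 := ENNReal.toReal_mono hrhs_fin h
    rw [ENNReal.toReal_mul, ENNReal.toReal_ofReal (by positivity),
      ENNReal.toReal_add (ENNReal.div_lt_top ENNReal.ofReal_ne_top (by norm_num)).ne
        (ENNReal.mul_ne_top hcfin ENNReal.ofReal_ne_top),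
      ENNReal.toReal_div, ENNReal.toReal_ofReal hv.le, ENNReal.toReal_mul,
      ENNReal.toReal_ofReal (by positivity)] at h2
    simpa using h2
  -- final algebra
  have hgoal_eq : (ν (Iic (-t))).toReal = τ' := by rw [hIic]
  rw [hgoal_eq]
  rcases eq_or_lt_of_le hc'_nonneg with hc0 | hc0
  · -- c' = 0 forces A' = 0 and τ' = 0
    have hA0 : A' = 0 := by
      by_contra hA0
      have hApos : 0 < A' := lt_of_le_of_ne hA'_nonneg (Ne.symm hA0)
      have hzz := hreal (Real.sqrt (v / A')) (Real.sqrt_nonneg _)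
      rw [Real.sq_sqrt (by positivity), ← hc0] at hzz
      have hval : A' * (v / A') = v := by field_simp
      rw [hval] at hzz
      nlinarith
    have hτ0 : τ' = 0 := by
      have : τ' ≤ A' := by rw [hA'_eq]; nlinarith
      linarith
    exact ⟨0, le_rfl, zero_le_one, by rw [hτ0]; norm_num⟩
  · -- c' > 0
    have hzz := hreal (A' / c') (by positivity)
    have hkey2 : 2 * A' ^ 3 ≤ 3 * v * c' ^ 2 := by
      have h1 : A' * (A' / c') ^ 2 = A' ^ 3 / c' ^ 2 := by field_simp
      have h2 : c' * (2 * (A' / c') ^ 3 / 3) = (2 / 3) * (A' ^ 3 / c' ^ 2) := by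
        field_simp
      rw [h1, h2] at hzz
      have h3 : A' ^ 3 / c' ^ 2 - (2 / 3) * (A' ^ 3 / c' ^ 2) ≤ v / 2 := by linarith
      have h4 : (1 / 3) * (A' ^ 3 / c' ^ 2) ≤ v / 2 := by linarith
      have h5 : A' ^ 3 / c' ^ 2 ≤ 3 * v / 2 := by linarith
      have h6 := (div_le_iff₀ (by positivity : (0:ℝ) < c' ^ 2)).mp h5
      nlinarith
    refine ⟨Real.sqrt (2 * A'), Real.sqrt_nonneg _, ?_, ?_⟩
    · rw [show (1:ℝ) = Real.sqrt 1 from (Real.sqrt_one).symm]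
      exact Real.sqrt_le_sqrt (by linarith)
    · set u := Real.sqrt (2 * A') with hu
      have hu_nonneg : 0 ≤ u := Real.sqrt_nonneg _
      have hu2 : u ^ 2 = 2 * A' := Real.sq_sqrt (by linarith)
      have hu3 : u ^ 3 = 2 * A' * u := by
        rw [pow_succ, hu2]
      have hsv : 0 < Real.sqrt (3 * v) := Real.sqrt_pos.mpr (by linarith)
      have hsq : (A' * u) ^ 2 ≤ (c' * Real.sqrt (3 * v)) ^ 2 := by
        rw [mul_pow, mul_pow, hu2, Real.sq_sqrt (by positivity : (0:ℝ) ≤ 3 * v)]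
        nlinarith
      have hle : A' * u ≤ c' * Real.sqrt (3 * v) := by
        have h1 := Real.sqrt_le_sqrt hsq
        rwa [Real.sqrt_sq (by positivity), Real.sqrt_sq (by positivity)] at h1
      have h2 : t * (A' * u) / Real.sqrt (3 * v) ≤ t * c' := by
        rw [div_le_iff₀ hsv, mul_assoc]
        exact mul_le_mul_of_nonneg_left hle ht.le
      have hτA : τ' = A' - c' * t := by linarith [hA'_eq]
      rw [hu2, hu3, hτA]
      have hexp : t / Real.sqrt (3 * v) * (2 * A' * u)
          = 2 * (t * (A' * u) / Real.sqrt (3 * v)) := by ring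
      rw [hexp]
      linarith

lemma tail_bound_cases {q : ℝ → ENNReal} (hsym : ∀ x, q (-x) = q x)
    (hmono : ∀ ⦃x y : ℝ⦄, 0 ≤ x → x ≤ y → q y ≤ q x)
    {t v : ℝ} (ht : 0 < t)
    (hprob : volume.withDensity q Set.univ = 1)
    (hmom : ∫⁻ x, ENNReal.ofReal (x ^ 2) * q x ∂volume ≤ ENNReal.ofReal v) :
    0 < v ∧
    (t ^ 2 ≤ 4 / 3 * v →
      ((volume.withDensity q) (Iic (-t))).toReal ≤ 1 / 2 - t / (2 * Real.sqrt (3 * v))) ∧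
    (4 / 3 * v ≤ t ^ 2 →
      ((volume.withDensity q) (Iic (-t))).toReal ≤ 2 / 9 * (v / t ^ 2)) := by
  obtain ⟨hv, u, hu0, hu1, hub⟩ := tail_bound hsym hmono ht hprob hmom
  have hsv : 0 < Real.sqrt (3 * v) := Real.sqrt_pos.mpr (by linarith)
  set k := t / Real.sqrt (3 * v) with hkdef
  have hk0 : 0 < k := by positivity
  have hksq : k ^ 2 = t ^ 2 / (3 * v) := by
    rw [hkdef, div_pow, Real.sq_sqrt (by linarith : (0:ℝ) ≤ 3 * v)]
  refine ⟨hv, fun hcase => ?_, fun hcase => ?_⟩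
  · -- linear regime
    have hk23 : k ≤ 2 / 3 := by
      have h1 : k ^ 2 ≤ 4 / 9 := by
        rw [hksq, div_le_iff₀ (by linarith : (0:ℝ) < 3 * v)]
        linarith
      nlinarith
    have hq2 : (0:ℝ) ≤ 1 + u + u ^ 2 := by positivity
    have h3 : k * (1 + u + u ^ 2) ≤ 2 / 3 * (1 + u + u ^ 2) :=
      mul_le_mul_of_nonneg_right hk23 hq2
    have h4 : 0 ≤ 1 + u - k * (1 + u + u ^ 2) := by nlinarith
    have h5 : 0 ≤ (1 - u) * (1 + u - k * (1 + u + u ^ 2)) :=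
      mul_nonneg (by linarith) h4
    have h6 : u ^ 2 - k * u ^ 3 ≤ 1 - k := by nlinarith
    have h7 : (1 - k) / 2 = 1 / 2 - t / (2 * Real.sqrt (3 * v)) := by
      rw [hkdef]; ring
    calc ((volume.withDensity q) (Iic (-t))).toReal ≤ (u ^ 2 - k * u ^ 3) / 2 := hub
      _ ≤ (1 - k) / 2 := by linarith
      _ = _ := h7
  · -- quadratic regime
    have h5 : (0:ℝ) ≤ (3 * k * u - 2) ^ 2 * (3 * k * u + 1) :=
      mul_nonneg (sq_nonneg _) (by positivity)
    have h6 : u ^ 2 - k * u ^ 3 ≤ 4 / (27 * k ^ 2) := by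
      rw [le_div_iff₀ (by positivity)]
      nlinarith
    have h7 : 4 / (27 * k ^ 2) / 2 = 2 / 9 * (v / t ^ 2) := by
      rw [hksq]
      have hv' : v ≠ 0 := ne_of_gt hv
      have ht' : t ≠ 0 := ne_of_gt ht
      field_simp
      ring
    calc ((volume.withDensity q) (Iic (-t))).toReal ≤ (u ^ 2 - k * u ^ 3) / 2 := hub
      _ ≤ 4 / (27 * k ^ 2) / 2 := by linarith
      _ = _ := h7

lemma cantelli {Ω : Type*} [MeasurableSpace Ω] (μ : Measure Ω) [IsProbabilityMeasure μ]
    {Y : Ω → ℝ} (hY : Measurable Y) {C : ℝ} (hbdd : ∀ ω, |Y ω| ≤ C)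
    (hpos : 0 < ∫ ω, Y ω ∂μ) :
    (μ {ω | Y ω ≤ 0}).toReal
      ≤ variance Y μ / (variance Y μ + (∫ ω, Y ω ∂μ) ^ 2) := by
  have hmem : MemLp Y 2 μ :=
    (memLp_top_of_bound hY.aestronglyMeasurable C (ae_of_all _ hbdd)).mono_exponent
      le_top
  set e := ∫ ω, Y ω ∂μ with he
  set V := variance Y μ with hV
  have hV0 : 0 ≤ V := variance_nonneg _ _
  set u := V / e with hu
  have hu0 : 0 ≤ u := div_nonneg hV0 hpos.le
  set W := fun ω => e + u - Y ω with hW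
  have hWmem : MemLp W 2 μ := (memLp_const (e + u)).sub hmem
  have hW2int : Integrable (fun ω => W ω ^ 2) μ := hWmem.integrable_sq
  have hYint : Integrable Y μ := hmem.integrable one_le_two
  have hY2int : Integrable (fun ω => Y ω ^ 2) μ := hmem.integrable_sq
  have hvar : ∫ ω, Y ω ^ 2 ∂μ = V + e ^ 2 := by
    have h := variance_eq_sub hmem
    simp only [Pi.pow_apply] at h
    rw [← he] at h
    rw [hV, h]
    ring
  have hEW2 : ∫ ω, W ω ^ 2 ∂μ = V + u ^ 2 := by
    have hfun : (fun ω => W ω ^ 2)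
        = fun ω => (e + u) ^ 2 - 2 * (e + u) * Y ω + Y ω ^ 2 := by
      funext ω; rw [hW]; ring
    have hint_a : Integrable (fun ω => (e + u) ^ 2 - 2 * (e + u) * Y ω) μ :=
      (integrable_const _).sub (hYint.const_mul _)
    rw [hfun, integral_add hint_a hY2int,
      integral_sub (integrable_const _) (hYint.const_mul _), integral_const,
      integral_const_mul, hvar]
    simp only [probReal_univ, ENNReal.toReal_one, smul_eq_mul, one_mul]
    rw [← he]
    ring
  have heu : 0 < e + u := by linarith
  have hsubset : {ω | Y ω ≤ 0}
      ⊆ {ω | ENNReal.ofReal ((e + u) ^ 2) ≤ ENNReal.ofReal (W ω ^ 2)} := by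
    intro ω hω
    have h1 : e + u ≤ W ω := by
      simp only [Set.mem_setOf_eq] at hω
      simp only [hW]
      linarith
    exact ENNReal.ofReal_le_ofReal (by nlinarith)
  have hWmeas : Measurable fun ω => ENNReal.ofReal (W ω ^ 2) :=
    ((measurable_const.sub hY).pow_const 2).ennreal_ofReal
  have hmarkov := meas_ge_le_lintegral_div (μ := μ) hWmeas.aemeasurable
    (ε := ENNReal.ofReal ((e + u) ^ 2))
    (ENNReal.ofReal_pos.mpr (by positivity)).ne' ENNReal.ofReal_ne_top
  have hlin : ∫⁻ ω, ENNReal.ofReal (W ω ^ 2) ∂μ = ENNReal.ofReal (V + u ^ 2) := by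
    rw [← ofReal_integral_eq_lintegral_ofReal hW2int (ae_of_all _ fun ω => sq_nonneg _),
      hEW2]
  have hchain : μ {ω | Y ω ≤ 0} ≤ ENNReal.ofReal ((V + u ^ 2) / (e + u) ^ 2) := by
    refine le_trans (measure_mono hsubset) (le_trans hmarkov ?_)
    rw [hlin, ENNReal.ofReal_div_of_pos (by positivity)]
  have heq : (V + u ^ 2) / (e + u) ^ 2 = V / (V + e ^ 2) := by
    rw [hu]
    have he' : e ≠ 0 := ne_of_gt hpos
    have hVe : V + e ^ 2 ≠ 0 := by positivity
    field_simp
    ring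
  rw [heq] at hchain
  exact ENNReal.toReal_le_of_le_ofReal (by positivity) hchain

lemma sqrt_four : Real.sqrt 4 = 2 := by
  rw [show (4:ℝ) = 2 ^ 2 by norm_num, Real.sqrt_sq (by norm_num)]

theorem main_pos
    {Ω : Type*} [MeasurableSpace Ω] (μ : Measure Ω) [IsProbabilityMeasure μ]
    (M : ℕ) (hM : 1 ≤ M) (g σ nb : ℝ) (hg : 0 < g) (hσ : 0 ≤ σ) (hnb : 0 < nb)
    (G : Fin M → Ω → ℝ)
    (hmeas : ∀ i, Measurable (G i))
    (hindep : iIndepFun G μ)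
    (hL2 : ∀ i, MemLp (G i) 2 μ)
    (hmean : ∀ i, ∫ ω, G i ω ∂μ = g)
    (hvar : ∀ i, variance (G i) μ ≤ σ ^ 2 / nb)
    (hunimodal : ∀ i, UnimodalSymmetric (Measure.map (fun ω => G i ω - g) μ)) :
    (μ {ω | Real.sign (∑ i, Real.sign (G i ω)) ≠ Real.sign g}).toReal
      ≤ (Real.sqrt 6 / 2) * (1 / Real.sqrt M) * (σ / (Real.sqrt nb * |g|)) := by
  set v := σ ^ 2 / nb with hvdef
  -- per-worker bound
  have hbound : ∀ i : Fin M, 0 < v ∧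
      (g ^ 2 ≤ 4 / 3 * v →
        (μ {ω | G i ω ≤ 0}).toReal ≤ 1 / 2 - g / (2 * Real.sqrt (3 * v))) ∧
      (4 / 3 * v ≤ g ^ 2 →
        (μ {ω | G i ω ≤ 0}).toReal ≤ 2 / 9 * (v / g ^ 2)) := by
    intro i
    obtain ⟨q, hqeq, hqsym, hqmono⟩ := hunimodal i
    have hqmeas : Measurable q := unimodal_measurable hqsym hqmono
    have hGg_meas : Measurable fun ω => G i ω - g := (hmeas i).sub measurable_const
    have hprob : volume.withDensity q Set.univ = 1 := by
      rw [← hqeq]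
      have : IsProbabilityMeasure (Measure.map (fun ω => G i ω - g) μ) :=
        Measure.isProbabilityMeasure_map hGg_meas.aemeasurable
      exact measure_univ
    have hsub : MemLp (fun ω => G i ω - g) 2 μ := (hL2 i).sub (memLp_const g)
    have hint2 : Integrable (fun ω => (G i ω - g) ^ 2) μ := hsub.integrable_sq
    have hvar_eq : ∫ ω, (G i ω - g) ^ 2 ∂μ = variance (G i) μ := by
      have h := variance_eq_integral (hL2 i).aemeasurable
      rw [hmean i] at h
      rw [h]
    have hint_map : Integrable (fun x : ℝ => x ^ 2)
        (Measure.map (fun ω => G i ω - g) μ) := by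
      rw [integrable_map_measure (continuous_pow 2).aestronglyMeasurable
        hGg_meas.aemeasurable]
      exact hint2
    have hmom_int : ∫ x, x ^ 2 ∂(Measure.map (fun ω => G i ω - g) μ)
        = variance (G i) μ := by
      rw [integral_map hGg_meas.aemeasurable (continuous_pow 2).aestronglyMeasurable]
      exact hvar_eq
    have hmom : ∫⁻ x, ENNReal.ofReal (x ^ 2) * q x ∂volume ≤ ENNReal.ofReal v := by
      have h2 : ∫⁻ x, ENNReal.ofReal (x ^ 2) * q x ∂volume
          = ∫⁻ x, ENNReal.ofReal (x ^ 2) ∂(volume.withDensity q) := by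
        rw [lintegral_withDensity_eq_lintegral_mul _ hqmeas
          ((measurable_id'.pow_const 2).ennreal_ofReal)]
        exact lintegral_congr fun x => mul_comm _ _
      have h1 : ∫⁻ x, ENNReal.ofReal (x ^ 2) ∂(Measure.map (fun ω => G i ω - g) μ)
          = ENNReal.ofReal (∫ x, x ^ 2 ∂(Measure.map (fun ω => G i ω - g) μ)) :=
        (ofReal_integral_eq_lintegral_ofReal hint_map
          (ae_of_all _ fun x => sq_nonneg x)).symm
      rw [h2, ← hqeq, h1, hmom_int]
      exact ENNReal.ofReal_le_ofReal (hvar i)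
    have hevent : μ {ω | G i ω ≤ 0} = (volume.withDensity q) (Iic (-g)) := by
      rw [← hqeq, Measure.map_apply hGg_meas measurableSet_Iic]
      congr 1
      ext ω
      simp only [Set.mem_setOf_eq, Set.mem_preimage, Set.mem_Iic]
      constructor <;> intro h <;> linarith
    have hres := tail_bound_cases hqsym hqmono hg hprob hmom
    rw [← hevent] at hres
    exact hres
  have hv : 0 < v := (hbound ⟨0, by omega⟩).1
  have hsqrtv : Real.sqrt v = σ / Real.sqrt nb := by
    rw [hvdef, Real.sqrt_div (sq_nonneg σ), Real.sqrt_sq hσ]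
  -- uniform bound p⋆ with the needed numeric inequality
  obtain ⟨pstar, hp0, hphalf, hpbound, hfinal⟩ :
      ∃ p : ℝ, 0 ≤ p ∧ p < 1 / 2 ∧
        (∀ i, (μ {ω | G i ω ≤ 0}).toReal ≤ p) ∧
        Real.sqrt (p * (1 - p)) / (1 - 2 * p)
          ≤ Real.sqrt 6 / 2 * (Real.sqrt v / g) := by
    have hsv : 0 < Real.sqrt (3 * v) := Real.sqrt_pos.mpr (by linarith)
    have hsvnn : 0 ≤ Real.sqrt v := Real.sqrt_nonneg v
    rcases le_total (g ^ 2) (4 / 3 * v) with hcase | hcase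
    · -- linear regime
      set p := 1 / 2 - g / (2 * Real.sqrt (3 * v)) with hp
      have hg3v : g ≤ Real.sqrt (3 * v) := by
        rw [show g = Real.sqrt (g ^ 2) from (Real.sqrt_sq hg.le).symm]
        exact Real.sqrt_le_sqrt (by nlinarith)
      have hfrac : g / (2 * Real.sqrt (3 * v)) ≤ 1 / 2 := by
        rw [div_le_iff₀ (by positivity)]
        linarith
      have hfracpos : 0 < g / (2 * Real.sqrt (3 * v)) := by positivity
      refine ⟨p, by rw [hp]; linarith, by rw [hp]; linarith,
        fun i => (hbound i).2.1 hcase, ?_⟩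
      have h1 : 1 - 2 * p = g / Real.sqrt (3 * v) := by rw [hp]; ring
      have hppos : 0 ≤ p := by rw [hp]; linarith
      have h2 : Real.sqrt (p * (1 - p)) ≤ 1 / 2 := by
        calc Real.sqrt (p * (1 - p)) ≤ Real.sqrt (1 / 4) :=
              Real.sqrt_le_sqrt (by nlinarith)
          _ = 1 / 2 := by
              rw [show (1 / 4 : ℝ) = (1 / 2) ^ 2 by norm_num,
                Real.sqrt_sq (by norm_num)]
      rw [h1, div_div_eq_mul_div]
      have h3 : Real.sqrt (3 * v) = Real.sqrt 3 * Real.sqrt v :=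
        Real.sqrt_mul (by norm_num) v
      have h36 : Real.sqrt 3 ≤ Real.sqrt 6 := Real.sqrt_le_sqrt (by norm_num)
      have hmain : Real.sqrt (p * (1 - p)) * Real.sqrt (3 * v)
          ≤ Real.sqrt 6 / 2 * Real.sqrt v := by
        rw [h3]
        have hs3 : 0 ≤ Real.sqrt 3 := Real.sqrt_nonneg 3
        have hsnn : 0 ≤ Real.sqrt (p * (1 - p)) := Real.sqrt_nonneg _
        nlinarith
      rw [show Real.sqrt 6 / 2 * (Real.sqrt v / g)
          = Real.sqrt 6 / 2 * Real.sqrt v / g by ring]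
      gcongr
    · -- quadratic regime
      set p := 2 / 9 * (v / g ^ 2) with hp
      have hp0 : 0 ≤ p := by rw [hp]; positivity
      have hp16 : p ≤ 1 / 6 := by
        have hvg : v / g ^ 2 ≤ 3 / 4 := by
          rw [div_le_iff₀ (by positivity)]
          linarith
        rw [hp]
        linarith
      refine ⟨p, hp0, by linarith, fun i => (hbound i).2.2 hcase, ?_⟩
      have hsp : Real.sqrt (p * (1 - p)) ≤ Real.sqrt p :=
        Real.sqrt_le_sqrt (by nlinarith)
      have hsp2 : Real.sqrt p = Real.sqrt 2 * Real.sqrt v / (3 * g) := by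
        have h9 : (2:ℝ) / 9 * (v / g ^ 2) = 2 * v / (3 * g) ^ 2 := by
          field_simp
          ring
        rw [hp, h9, Real.sqrt_div (by positivity), Real.sqrt_sq (by positivity),
          Real.sqrt_mul (by norm_num)]
      have hd : 2 / 3 ≤ 1 - 2 * p := by linarith
      have hnum : 0 ≤ Real.sqrt (p * (1 - p)) := Real.sqrt_nonneg _
      calc Real.sqrt (p * (1 - p)) / (1 - 2 * p)
          ≤ Real.sqrt p / (2 / 3) := by
            apply div_le_div₀ (Real.sqrt_nonneg p) hsp (by norm_num) hd
        _ = 3 / 2 * Real.sqrt p := by ring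
        _ = 3 / 2 * (Real.sqrt 2 * Real.sqrt v / (3 * g)) := by rw [hsp2]
        _ = Real.sqrt 2 / 2 * (Real.sqrt v / g) := by ring
        _ ≤ Real.sqrt 6 / 2 * (Real.sqrt v / g) := by
            have h26 : Real.sqrt 2 ≤ Real.sqrt 6 := Real.sqrt_le_sqrt (by norm_num)
            have : 0 ≤ Real.sqrt v / g := by positivity
            nlinarith
  
  -- the sign random variables
  set X := fun (i : Fin M) (ω : Ω) => Real.sign (G i ω) with hXdef
  have hXmeas : ∀ i, Measurable (X i) := fun i => measurable_realSign.comp (hmeas i)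
  have hXbdd : ∀ i ω, |X i ω| ≤ 1 := fun i ω => abs_realSign_le _
  have hXmem : ∀ i, MemLp (X i) 2 μ := fun i =>
    (memLp_top_of_bound (hXmeas i).aestronglyMeasurable 1
      (ae_of_all _ (hXbdd i))).mono_exponent le_top
  have hXint : ∀ i, Integrable (X i) μ := fun i => (hXmem i).integrable one_le_two
  have hEi_meas : ∀ i, MeasurableSet {ω | G i ω ≤ 0} := fun i =>
    measurableSet_le (hmeas i) measurable_const
  -- expectation lower bound
  have hEX : ∀ i, 1 - 2 * pstar ≤ ∫ ω, X i ω ∂μ := by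
    intro i
    set E := {ω | G i ω ≤ 0} with hE
    have hind_int : Integrable (E.indicator fun _ => (1:ℝ)) μ :=
      (integrable_const 1).indicator (hEi_meas i)
    have hφint : Integrable (fun ω => 1 - 2 * E.indicator (fun _ => (1:ℝ)) ω) μ :=
      (integrable_const 1).sub (hind_int.const_mul 2)
    have hle : ∀ ω, 1 - 2 * E.indicator (fun _ => (1:ℝ)) ω ≤ X i ω := by
      intro ω
      by_cases hω : G i ω ≤ 0
      · have hmem : ω ∈ E := hω
        rw [Set.indicator_of_mem hmem]
        have h1 := (abs_le.mp (abs_realSign_le (G i ω))).1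
        simp only [hXdef]
        linarith
      · have hmem : ω ∉ E := hω
        rw [Set.indicator_of_notMem hmem]
        have hgpos : 0 < G i ω := lt_of_not_ge hω
        simp only [hXdef, Real.sign_of_pos hgpos]
        norm_num
    have hmono := integral_mono hφint (hXint i) hle
    have hcomp : ∫ ω, (1 - 2 * E.indicator (fun _ => (1:ℝ)) ω) ∂μ
        = 1 - 2 * (μ E).toReal := by
      rw [integral_sub (integrable_const 1) (hind_int.const_mul 2), integral_const,
        integral_const_mul, integral_indicator_const _ (hEi_meas i)]
      simp [measure_univ]
      rfl
    rw [hcomp] at hmono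
    have hpi := hpbound i
    linarith
  -- second moment bound
  have hX2le : ∀ i, ∫ ω, X i ω ^ 2 ∂μ ≤ 1 := by
    intro i
    calc ∫ ω, X i ω ^ 2 ∂μ ≤ ∫ _ω, (1:ℝ) ∂μ := by
          refine integral_mono (hXmem i).integrable_sq (integrable_const 1) fun ω => ?_
          have h := abs_realSign_le (G i ω)
          have h2 : X i ω ^ 2 = |X i ω| ^ 2 := (sq_abs _).symm
          rw [h2]
          nlinarith [abs_nonneg (X i ω)]
      _ = 1 := by simp
  have hphalf' : 0 < 1 - 2 * pstar := by linarith
  have hXvar : ∀ i, variance (X i) μ ≤ 4 * pstar * (1 - pstar) := by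
    intro i
    have hd := variance_eq_sub (hXmem i)
    simp only [Pi.pow_apply] at hd
    have h1 := hEX i
    have hsq : (1 - 2 * pstar) ^ 2 ≤ (∫ ω, X i ω ∂μ) ^ 2 := by nlinarith
    nlinarith [hX2le i, hd]
  -- the vote sum
  set Y := fun ω => ∑ i, X i ω with hYdef
  have hYmeas : Measurable Y := by
    apply Finset.measurable_sum
    exact fun i _ => hXmeas i
  have hYbdd : ∀ ω, |Y ω| ≤ (M : ℝ) := by
    intro ω
    calc |Y ω| ≤ ∑ i, |X i ω| := Finset.abs_sum_le_sum_abs _ _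
      _ ≤ ∑ _i : Fin M, (1:ℝ) := Finset.sum_le_sum fun i _ => hXbdd i ω
      _ = (M : ℝ) := by simp
  have hEY : (M : ℝ) * (1 - 2 * pstar) ≤ ∫ ω, Y ω ∂μ := by
    have hconst : (∑ _i : Fin M, (1 - 2 * pstar)) = (M : ℝ) * (1 - 2 * pstar) := by
      rw [Finset.sum_const, Finset.card_univ, Fintype.card_fin, nsmul_eq_mul]
    rw [hYdef, integral_finset_sum _ fun i _ => hXint i, ← hconst]
    exact Finset.sum_le_sum fun i _ => hEX i
  have hMpos : (0:ℝ) < M := by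
    have : (1:ℝ) ≤ M := by exact_mod_cast hM
    linarith
  have hEYpos : 0 < ∫ ω, Y ω ∂μ :=
    lt_of_lt_of_le (mul_pos hMpos hphalf') hEY
  -- variance of the sum
  have hYvar : variance Y μ ≤ (M : ℝ) * (4 * pstar * (1 - pstar)) := by
    have hsignindep : iIndepFun
        (fun i => Real.sign ∘ G i) μ :=
      hindep.comp (fun _ => Real.sign) (fun _ => measurable_realSign)
    have hYeq : Y = ∑ i, X i := by
      funext ω
      rw [hYdef, Finset.sum_apply]
    have hvs := IndepFun.variance_sum (μ := μ) (X := X) (s := Finset.univ)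
      (fun i _ => hXmem i)
      (fun i _ j _ hij => hsignindep.indepFun hij)
    rw [hYeq, hvs]
    calc ∑ i, variance (X i) μ ≤ ∑ _i : Fin M, (4 * pstar * (1 - pstar)) :=
          Finset.sum_le_sum fun i _ => hXvar i
      _ = (M : ℝ) * (4 * pstar * (1 - pstar)) := by
          rw [Finset.sum_const, Finset.card_univ, Fintype.card_fin, nsmul_eq_mul]
  -- Cantelli
  have hcant := cantelli μ hYmeas (C := (M : ℝ)) hYbdd hEYpos
  -- numeric chain
  set e := ∫ ω, Y ω ∂μ with hedef
  set V := variance Y μ with hVdef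
  have hVnn : 0 ≤ V := variance_nonneg _ _
  set B := (M : ℝ) * (4 * pstar * (1 - pstar)) with hBdef
  set a := (M : ℝ) * (1 - 2 * pstar) with hadef
  have hapos : 0 < a := mul_pos hMpos hphalf'
  have hBnn : 0 ≤ B := by
    rw [hBdef]
    have h1p : (0:ℝ) ≤ 1 - pstar := by linarith
    nlinarith
  have hamgm : V / (V + e ^ 2) ≤ Real.sqrt B / (2 * a) := by
    rcases eq_or_lt_of_le hVnn with hV0 | hV0
    · rw [← hV0]
      simp only [zero_div, zero_add]
      positivity
    · have hsVpos : 0 < Real.sqrt V := Real.sqrt_pos.mpr hV0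
      have h2 : 0 ≤ (Real.sqrt V - e) ^ 2 := sq_nonneg _
      have h2' : Real.sqrt V ^ 2 = V := Real.sq_sqrt hVnn
      have h1 : 2 * a * Real.sqrt V ≤ V + e ^ 2 := by
        have hae : a ≤ e := hEY
        nlinarith
      have h3 : V / (V + e ^ 2) ≤ V / (2 * a * Real.sqrt V) :=
        div_le_div_of_nonneg_left hVnn (by positivity) h1
      have h4 : V / (2 * a * Real.sqrt V) = Real.sqrt V / (2 * a) := by
        rw [div_eq_div_iff (by positivity) (by positivity)]
        linear_combination (-2 * a) * h2'
      have h5 : Real.sqrt V / (2 * a) ≤ Real.sqrt B / (2 * a) := by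
        gcongr
      calc V / (V + e ^ 2) ≤ V / (2 * a * Real.sqrt V) := h3
        _ = Real.sqrt V / (2 * a) := h4
        _ ≤ Real.sqrt B / (2 * a) := h5
  have hsM : 0 < Real.sqrt M := Real.sqrt_pos.mpr hMpos
  have hMsq : Real.sqrt M * Real.sqrt M = (M : ℝ) := Real.mul_self_sqrt hMpos.le
  have hBsplit : Real.sqrt B = Real.sqrt M * (2 * Real.sqrt (pstar * (1 - pstar))) := by
    rw [hBdef, show (M : ℝ) * (4 * pstar * (1 - pstar))
        = (M : ℝ) * (4 * (pstar * (1 - pstar))) by ring,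
      Real.sqrt_mul (by positivity), Real.sqrt_mul (by norm_num : (0:ℝ) ≤ 4),
      sqrt_four]
  have hstep : Real.sqrt B / (2 * a)
      ≤ Real.sqrt 6 / 2 * (1 / Real.sqrt M) * (σ / (Real.sqrt nb * |g|)) := by
    have hgabs : |g| = g := abs_of_pos hg
    have hσg : σ / (Real.sqrt nb * g) = Real.sqrt v / g := by
      rw [hsqrtv, ← div_div]
    rw [hgabs, hσg, hBsplit, hadef]
    have hLHS : Real.sqrt M * (2 * Real.sqrt (pstar * (1 - pstar)))
        / (2 * ((M : ℝ) * (1 - 2 * pstar)))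
        = 1 / Real.sqrt M * (Real.sqrt (pstar * (1 - pstar)) / (1 - 2 * pstar)) := by
      field_simp
      linear_combination (Real.sqrt (pstar * (1 - pstar))) * hMsq
    rw [hLHS]
    calc 1 / Real.sqrt M * (Real.sqrt (pstar * (1 - pstar)) / (1 - 2 * pstar))
        ≤ 1 / Real.sqrt M * (Real.sqrt 6 / 2 * (Real.sqrt v / g)) := by
          refine mul_le_mul_of_nonneg_left hfinal (by positivity)
      _ = Real.sqrt 6 / 2 * (1 / Real.sqrt M) * (Real.sqrt v / g) := by ring
  -- identify the event
  have hgoalset : {ω | Real.sign (∑ i, Real.sign (G i ω)) ≠ Real.sign g}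
      = {ω | Y ω ≤ 0} := by
    ext ω
    simp only [Set.mem_setOf_eq, Real.sign_of_pos hg, hYdef, hXdef]
    exact realSign_ne_one_iff
  rw [hgoalset]
  calc (μ {ω | Y ω ≤ 0}).toReal ≤ V / (V + e ^ 2) := hcant
    _ ≤ Real.sqrt B / (2 * a) := hamgm
    _ ≤ _ := hstep

lemma unimodalSymmetric_map_neg {ν : Measure ℝ} (h : UnimodalSymmetric ν) :
    UnimodalSymmetric (Measure.map (fun x : ℝ => -x) ν) := by
  obtain ⟨q, rfl, hsym, hmono⟩ := h
  refine ⟨q, ?_, hsym, hmono⟩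
  have hq := unimodal_measurable hsym hmono
  ext s hs
  rw [Measure.map_apply measurable_neg hs,
    withDensity_apply _ (hs.preimage measurable_neg), withDensity_apply _ hs,
    ← symm_setLIntegral q s]
  exact setLIntegral_congr_fun (hs.preimage measurable_neg)
    (fun a _ => (hsym a).symm)

/-- **Majority vote improves sign reliability under unimodal symmetric noise.** Let `g ≠ 0` and,
for each of `M` workers, let `G̃⁽ᵐ⁾` be independent real random variables with mean `g`, variance
at most `σ²/n_b`, and noise `G̃⁽ᵐ⁾ − g` unimodal and symmetric about `0`. With
`S̄ := sign(Σₘ sign(G̃⁽ᵐ⁾))` the majority vote,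
`P(S̄ ≠ sign g) ≤ (√6/2) · (1/√M) · σ/(√n_b · |g|)`. -/
theorem majority_vote_unimodal_symmetric
    {Ω : Type*} [MeasurableSpace Ω] (μ : Measure Ω) [IsProbabilityMeasure μ]
    (M : ℕ) (hM : 1 ≤ M) (g σ nb : ℝ) (hg : g ≠ 0) (hσ : 0 ≤ σ) (hnb : 0 < nb)
    (G : Fin M → Ω → ℝ)
    (hmeas : ∀ i, Measurable (G i))
    (hindep : iIndepFun G μ)
    (hL2 : ∀ i, MemLp (G i) 2 μ)
    (hmean : ∀ i, ∫ ω, G i ω ∂μ = g)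
    (hvar : ∀ i, variance (G i) μ ≤ σ ^ 2 / nb)
    (hunimodal : ∀ i, UnimodalSymmetric (Measure.map (fun ω => G i ω - g) μ)) :
    (μ {ω | Real.sign (∑ i, Real.sign (G i ω)) ≠ Real.sign g}).toReal
      ≤ (Real.sqrt 6 / 2) * (1 / Real.sqrt M) * (σ / (Real.sqrt nb * |g|)) := by
  rcases hg.lt_or_gt with hneg | hpos
  · -- negative case: apply the positive case to -G, -g
    have hvneg : ∀ i, variance (fun ω => -G i ω) μ ≤ σ ^ 2 / nb := by
      intro i
      have h1 : variance (fun ω => -G i ω) μ = variance (G i) μ := by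
        have h2 : (fun ω => -G i ω) = fun ω => (-1 : ℝ) * G i ω := by
          funext ω; ring
        rw [h2, variance_const_mul]
        norm_num
      rw [h1]
      exact hvar i
    have huni : ∀ i, UnimodalSymmetric
        (Measure.map (fun ω => -G i ω - -g) μ) := by
      intro i
      have h1 : (fun ω => -G i ω - -g)
          = (fun x : ℝ => -x) ∘ (fun ω => G i ω - g) := by
        funext ω; simp only [Function.comp_apply]; ring
      rw [h1, ← Measure.map_map (g := fun x : ℝ => -x) (f := fun ω => G i ω - g) measurable_neg ((hmeas i).sub measurable_const)]
      exact unimodalSymmetric_map_neg (hunimodal i)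
    have hmain := main_pos μ M hM (-g) σ nb (by linarith) hσ hnb (fun i ω => -G i ω)
      (fun i => (hmeas i).neg)
      (hindep.comp (fun _ => fun x : ℝ => -x) (fun _ => measurable_neg))
      (fun i => (hL2 i).neg)
      (fun i => by rw [integral_neg, hmean i])
      hvneg huni
    have hset : {ω | Real.sign (∑ i, Real.sign (-G i ω)) ≠ Real.sign (-g)}
        = {ω | Real.sign (∑ i, Real.sign (G i ω)) ≠ Real.sign g} := by
      ext ω
      simp only [Set.mem_setOf_eq]
      have h1 : (∑ i, Real.sign (-G i ω)) = -∑ i, Real.sign (G i ω) := by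
        rw [← Finset.sum_neg_distrib]
        exact Finset.sum_congr rfl fun i _ => Real.sign_neg
      rw [h1, Real.sign_neg, Real.sign_neg]
      exact not_congr neg_inj
    rw [hset, abs_neg] at hmain
    exact hmain
  · exact main_pos μ M hM g σ nb hpos hσ hnb G hmeas hindep hL2 hmean hvar hunimodal
end
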